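/- Let X and Y be Polish spaces, f : X → Y a Borel measurable map, and μ a Borel probability measure on X. Then for every subset E ⊆ Y (not necessarily Borel), the outer measure of E under the image measure μ ∘ f⁻¹ equals the outer measure of f⁻¹(E) under μ: (μ ∘ f⁻¹)*(E) = μ*(f⁻¹(E)). -/

import Mathlib

open MeasureTheory

section Aux

open Set Filter Topology
open scoped ENNReal NNReal

lemma tight_aux {X : Type*} [TopologicalSpace X] [PolishSpace X]
    [MeasurableSpace X] [BorelSpace X] (μ : Measure X) [IsFiniteMeasure μ]
    {ε : ℝ≥0∞} (hε : ε ≠ 0) : ∃ K : Set X, IsCompact K ∧ μ Kᶜ ≤ ε := by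
  letI := TopologicalSpace.upgradeIsCompletelyMetrizable X
  rcases isEmpty_or_nonempty X with hX | hX
  · refine ⟨∅, isCompact_empty, ?_⟩
    have : (∅ᶜ : Set X) = ∅ := by
      simp [eq_empty_of_isEmpty]
    simp [this]
  obtain ⟨u, hu⟩ := TopologicalSpace.exists_dense_seq X
  obtain ⟨δ, δpos, hδsum⟩ := ENNReal.exists_pos_sum_of_countable hε ℕ
  have key : ∀ n : ℕ, ∃ m : ℕ,
      μ (⋃ i ≤ m, Metric.closedBall (u i) (1/(n+1)))ᶜ ≤ δ n := by
    intro n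
    set U : ℕ → Set X := fun m => ⋃ i ≤ m, Metric.closedBall (u i) (1/(n+1)) with hU
    have hUm : ∀ m, MeasurableSet (U m) := by
      intro m
      exact MeasurableSet.biUnion (to_countable _)
        (fun i _ => Metric.isClosed_closedBall.measurableSet)
    have hcov : ⋂ m, (U m)ᶜ = ∅ := by
      rw [← compl_iUnion, compl_empty_iff]
      ext x
      simp only [mem_iUnion, mem_univ, iff_true]
      obtain ⟨i, hi⟩ := hu.exists_dist_lt x (by positivity : (0:ℝ) < 1/(n+1))
      refine ⟨i, ?_⟩
      have : x ∈ Metric.closedBall (u i) (1/(n+1)) :=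
        Metric.mem_closedBall.2 hi.le
      exact mem_biUnion (le_refl i) this
    have hanti : Antitone (fun m => (U m)ᶜ) := by
      intro a b hab
      apply compl_subset_compl.2
      exact biUnion_subset_biUnion_left (fun i hi => le_trans hi hab)
    have htend : Tendsto (fun m => μ (U m)ᶜ) atTop (𝓝 (μ (⋂ m, (U m)ᶜ))) := by
      exact tendsto_measure_iInter_atTop (fun m => (hUm m).compl.nullMeasurableSet) hanti
        ⟨0, measure_ne_top μ _⟩
    rw [hcov, measure_empty] at htend
    have hev := htend.eventually_le_const (by exact_mod_cast (δpos n) : (0:ℝ≥0∞) < δ n)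
    obtain ⟨m, hm⟩ := hev.exists
    exact ⟨m, hm⟩
  choose m hm using key
  set K : Set X := ⋂ n : ℕ, ⋃ i ≤ m n, Metric.closedBall (u i) (1/(n+1)) with hK
  have hKclosed : IsClosed K := by
    apply isClosed_iInter
    intro n
    exact (finite_Iic (m n)).isClosed_biUnion (fun i _ => Metric.isClosed_closedBall)
  have hKtb : TotallyBounded K := by
    rw [Metric.totallyBounded_iff]
    intro r hr
    obtain ⟨n, hn⟩ := exists_nat_one_div_lt hr
    refine ⟨u '' Iic (m n), ((finite_Iic (m n)).image u), ?_⟩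
    intro x hx
    have hx' : x ∈ ⋃ i ≤ m n, Metric.closedBall (u i) (1/(n+1)) :=
      mem_iInter.1 hx n
    simp only [mem_iUnion, exists_prop] at hx'
    obtain ⟨i, him, hxi⟩ := hx'
    refine mem_biUnion (mem_image_of_mem u him) ?_
    exact Metric.mem_ball.2 (lt_of_le_of_lt (Metric.mem_closedBall.1 hxi) hn)
  refine ⟨K, hKtb.isCompact_of_isClosed hKclosed, ?_⟩
  have : Kᶜ = ⋃ n : ℕ, (⋃ i ≤ m n, Metric.closedBall (u i) (1/(n+1)))ᶜ := by
    rw [hK, compl_iInter]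
  rw [this]
  calc μ (⋃ n : ℕ, (⋃ i ≤ m n, Metric.closedBall (u i) (1/(n+1)))ᶜ)
      ≤ ∑' n, μ (⋃ i ≤ m n, Metric.closedBall (u i) (1/(n+1)))ᶜ := measure_iUnion_le _
    _ ≤ ∑' n, (δ n : ℝ≥0∞) := ENNReal.tsum_le_tsum hm
    _ ≤ ε := hδsum.le

lemma simpleFunc_lusin {X Y : Type*} [TopologicalSpace X] [PolishSpace X]
    [MeasurableSpace X] [BorelSpace X] [TopologicalSpace Y] [T2Space Y]
    (μ : Measure X) [IsFiniteMeasure μ] (g : SimpleFunc X Y)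
    {ε : ℝ≥0∞} (hε : ε ≠ 0) :
    ∃ K : Set X, IsCompact K ∧ μ Kᶜ ≤ ε ∧ ContinuousOn g K := by
  letI := TopologicalSpace.upgradeIsCompletelyMetrizable X
  obtain ⟨K0, hK0c, hK0μ⟩ := tight_aux μ (by simpa using hε : ε/2 ≠ 0)
  set N : ℕ := g.range.card with hN
  set δ : ℝ≥0∞ := (ε/2) / (N+1) with hδ
  have hδ0 : δ ≠ 0 := by
    apply ENNReal.div_ne_zero.2
    exact ⟨by simpa using hε, by simp⟩
  have hF : ∀ y : Y, ∃ F, F ⊆ g ⁻¹' {y} ∧ IsClosed F ∧ μ (g ⁻¹' {y}) < μ F + δ := by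
    intro y
    obtain ⟨F, h1, h2, h3⟩ := (g.measurableSet_fiber y).exists_isClosed_lt_add
      (measure_ne_top μ _) hδ0
    exact ⟨F, h1, h2, h3⟩
  choose F hF1 hF2 hF3 using hF
  set K : Set X := ⋃ y ∈ g.range, (F y ∩ K0) with hK
  have hKc : IsCompact K := by
    apply g.range.finite_toSet.isCompact_biUnion
    intro y _
    exact hK0c.of_isClosed_subset ((hF2 y).inter hK0c.isClosed) inter_subset_right
  have hdiff : ∀ y : Y, μ (g ⁻¹' {y} \ F y) ≤ δ := by
    intro y
    rw [measure_diff_le_iff_le_add ((hF2 y).measurableSet.nullMeasurableSet)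
      (hF1 y) (measure_ne_top μ _)]
    exact (hF3 y).le
  have hcompl : Kᶜ ⊆ K0ᶜ ∪ ⋃ y ∈ g.range, (g ⁻¹' {y} \ F y) := by
    intro x hx
    by_cases hx0 : x ∈ K0
    · right
      refine mem_biUnion (g.mem_range_self x) ⟨rfl, ?_⟩
      intro hxF
      exact hx (mem_biUnion (g.mem_range_self x) ⟨hxF, hx0⟩)
    · exact Or.inl hx0
  have hμK : μ Kᶜ ≤ ε := by
    calc μ Kᶜ ≤ μ (K0ᶜ ∪ ⋃ y ∈ g.range, (g ⁻¹' {y} \ F y)) := measure_mono hcompl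
      _ ≤ μ K0ᶜ + μ (⋃ y ∈ g.range, (g ⁻¹' {y} \ F y)) := measure_union_le _ _
      _ ≤ ε/2 + ∑ y ∈ g.range, μ (g ⁻¹' {y} \ F y) := by
          gcongr
          exact measure_biUnion_finset_le _ _
      _ ≤ ε/2 + ∑ _y ∈ g.range, δ := by gcongr with y hy; exact hdiff y
      _ ≤ ε/2 + (N+1) * δ := by
          rw [Finset.sum_const, nsmul_eq_mul, ← hN]
          exact add_le_add_right (mul_le_mul_left (by simp : (N:ℝ≥0∞) ≤ N+1) δ) _
      _ ≤ ε/2 + ε/2 := by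
          gcongr
          exact ENNReal.mul_div_le
      _ = ε := ENNReal.add_halves ε
  refine ⟨K, hKc, hμK, ?_⟩
  have hrw : (⋃ y ∈ g.range, F y ∩ K0) = ⋃ y : {y // y ∈ g.range}, F y.1 ∩ K0 := by
    ext x; simp
  rw [hK, hrw]
  apply (locallyFinite_of_finite _).continuousOn_iUnion
  · intro i
    exact (hF2 i).inter hK0c.isClosed
  · rintro ⟨y, hy⟩
    apply ContinuousOn.congr (continuousOn_const (c := y))
    intro x hx
    exact hF1 y hx.1

lemma lusin_aux {X Y : Type*} [TopologicalSpace X] [PolishSpace X]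
    [MeasurableSpace X] [BorelSpace X]
    [TopologicalSpace Y] [PolishSpace Y] [MeasurableSpace Y] [BorelSpace Y]
    {f : X → Y} (hf : Measurable f) (μ : Measure X) [IsFiniteMeasure μ]
    {ε : ℝ≥0∞} (hε : ε ≠ 0) :
    ∃ K : Set X, IsCompact K ∧ μ Kᶜ ≤ ε ∧ ContinuousOn f K := by
  letI := TopologicalSpace.upgradeIsCompletelyMetrizable Y
  have hq : (ε/4 : ℝ≥0∞) ≠ 0 := by simpa using hε
  have h2 : ε/4 + ε/4 = ε/2 := by
    rw [ENNReal.div_add_div_same, ← two_mul, show (4:ℝ≥0∞) = 2*2 by norm_num,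
      ENNReal.mul_div_mul_left _ _ two_ne_zero (by norm_num)]
  have h4 : ε/4 + (ε/4 + (ε/4 + ε/4)) = ε := by
    rw [h2, ← add_assoc, h2, ENNReal.add_halves]
  have hsm : StronglyMeasurable f := hf.stronglyMeasurable
  set g : ℕ → SimpleFunc X Y := hsm.approx with hg
  have hgt : ∀ x, Tendsto (fun n => g n x) atTop (𝓝 (f x)) := hsm.tendsto_approx
  -- a real number below ε/4
  set r : ℝ≥0∞ := min (ε/4) 1 with hr
  have hr0 : 0 < r.toReal := by
    apply ENNReal.toReal_pos
    · simp only [hr, ne_eq, min_eq_iff]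
      intro h
      rcases h with ⟨h, -⟩ | ⟨h, -⟩
      · exact hq h
      · norm_num at h
    · exact ne_top_of_le_ne_top (by norm_num) (min_le_right _ _)
  have hrle : ENNReal.ofReal r.toReal ≤ ε/4 := by
    rw [ENNReal.ofReal_toReal (ne_top_of_le_ne_top (by norm_num) (min_le_right _ _))]
    exact min_le_left _ _
  obtain ⟨t, htm, htμ, htu⟩ := tendstoUniformlyOn_of_ae_tendsto'
    (f := fun n x => g n x) (g := f) (μ := μ)
    (fun n => (g n).stronglyMeasurable) hsm (ae_of_all _ hgt) hr0
  have htμ' : μ t ≤ ε/4 := htμ.trans hrle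
  obtain ⟨F, hFt, hFcl, hFμ⟩ := htm.compl.exists_isClosed_lt_add (measure_ne_top μ _) hq
  have hFdiff : μ (tᶜ \ F) ≤ ε/4 := by
    rw [measure_diff_le_iff_le_add (hFcl.measurableSet.nullMeasurableSet) hFt
      (measure_ne_top μ _)]
    exact hFμ.le
  obtain ⟨K0, hK0c, hK0μ⟩ := tight_aux μ hq
  obtain ⟨δ, δpos, hδsum⟩ := ENNReal.exists_pos_sum_of_countable hq ℕ
  have hKn : ∀ n : ℕ, ∃ K : Set X, IsCompact K ∧ μ Kᶜ ≤ δ n ∧ ContinuousOn (g n) K :=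
    fun n => simpleFunc_lusin μ (g n) (by exact_mod_cast (δpos n).ne')
  choose Kn hKnc hKnμ hKncont using hKn
  set K : Set X := (F ∩ K0) ∩ ⋂ n, Kn n with hK
  have hKcl : IsClosed K :=
    ((hFcl.inter hK0c.isClosed).inter (isClosed_iInter fun n => (hKnc n).isClosed))
  have hKc : IsCompact K :=
    hK0c.of_isClosed_subset hKcl (fun x hx => hx.1.2)
  have hsub : Kᶜ ⊆ t ∪ ((tᶜ \ F) ∪ (K0ᶜ ∪ ⋃ n, (Kn n)ᶜ)) := by
    intro x hx
    by_cases hxt : x ∈ t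
    · exact Or.inl hxt
    by_cases hxF : x ∈ F
    · by_cases hxK0 : x ∈ K0
      · by_cases hxI : x ∈ ⋂ n, Kn n
        · exact absurd ⟨⟨hxF, hxK0⟩, hxI⟩ hx
        · refine Or.inr (Or.inr (Or.inr ?_))
          simp only [mem_iUnion, mem_compl_iff]
          simpa only [mem_iInter, not_forall] using hxI
      · exact Or.inr (Or.inr (Or.inl hxK0))
    · exact Or.inr (Or.inl ⟨hxt, hxF⟩)
  have hKμ : μ Kᶜ ≤ ε := by
    calc μ Kᶜ ≤ μ (t ∪ ((tᶜ \ F) ∪ (K0ᶜ ∪ ⋃ n, (Kn n)ᶜ))) := measure_mono hsub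
      _ ≤ μ t + μ ((tᶜ \ F) ∪ (K0ᶜ ∪ ⋃ n, (Kn n)ᶜ)) := measure_union_le _ _
      _ ≤ μ t + (μ (tᶜ \ F) + μ (K0ᶜ ∪ ⋃ n, (Kn n)ᶜ)) :=
          add_le_add_right (measure_union_le _ _) _
      _ ≤ μ t + (μ (tᶜ \ F) + (μ K0ᶜ + μ (⋃ n, (Kn n)ᶜ))) :=
          add_le_add_right (add_le_add_right (measure_union_le _ _) _) _
      _ ≤ ε/4 + (ε/4 + (ε/4 + ε/4)) := by
          gcongr
          calc μ (⋃ n, (Kn n)ᶜ) ≤ ∑' n, μ (Kn n)ᶜ := measure_iUnion_le _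
            _ ≤ ∑' n, (δ n : ℝ≥0∞) := ENNReal.tsum_le_tsum hKnμ
            _ ≤ ε/4 := hδsum.le
      _ = ε := h4
  refine ⟨K, hKc, hKμ, ?_⟩
  have hcont : ∀ n, ContinuousOn (g n) K :=
    fun n => (hKncont n).mono (fun x hx => mem_iInter.1 hx.2 n)
  have huK : TendstoUniformlyOn (fun n x => g n x) f atTop K :=
    htu.mono (fun x hx => hFt hx.1.1)
  exact huK.continuousOn (Eventually.of_forall hcont).frequently

end Aux

section Main
open Set Filter Topology
open scoped ENNReal NNReal

/-- For Polish spaces `X`, `Y`, a Borel map `f : X → Y` and a Borel probability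
measure `μ` on `X`, the outer measure of any `E ⊆ Y` under the image measure
`μ ∘ f⁻¹` equals the `μ`-outer measure of `f ⁻¹' E`. -/
theorem outer_measure_map_eq_of_polish
    {X Y : Type*} [TopologicalSpace X] [PolishSpace X] [TopologicalSpace Y] [PolishSpace Y]
    [MeasurableSpace X] [BorelSpace X] [MeasurableSpace Y] [BorelSpace Y]
    {f : X → Y} (hf : Measurable f)
    (μ : Measure X) [IsProbabilityMeasure μ]
    (E : Set Y) :
    Measure.map f μ E = μ (f ⁻¹' E) := by
  letI := TopologicalSpace.upgradeIsCompletelyMetrizable X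
  apply le_antisymm
  · set A := toMeasurable μ (f ⁻¹' E) with hA
    have hAm : MeasurableSet A := measurableSet_toMeasurable μ _
    have hAμ : μ A = μ (f ⁻¹' E) := measure_toMeasurable _
    have hAsub : f ⁻¹' E ⊆ A := subset_toMeasurable μ _
    apply ENNReal.le_of_forall_pos_le_add
    intro ε hε _
    have hε2 : ((ε : ℝ≥0∞)/2) ≠ 0 := by
      simp only [ne_eq, ENNReal.div_eq_zero_iff]
      push_neg
      exact ⟨by exact_mod_cast hε.ne', by norm_num⟩
    obtain ⟨K, hKc, hKμ, hKcont⟩ := lusin_aux hf μ hε2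
    have hmeas : MeasurableSet (K ∩ Aᶜ) := hKc.isClosed.measurableSet.inter hAm.compl
    obtain ⟨L, hLsub, hLcl, hLμ⟩ := hmeas.exists_isClosed_lt_add (measure_ne_top μ _) hε2
    have hLK : L ⊆ K := hLsub.trans inter_subset_left
    have hLc : IsCompact L := hKc.of_isClosed_subset hLcl hLK
    have hLimg : IsCompact (f '' L) := hLc.image_of_continuousOn (hKcont.mono hLK)
    have hBm : MeasurableSet (f '' L)ᶜ := hLimg.isClosed.measurableSet.compl
    have hEB : E ⊆ (f '' L)ᶜ := by
      rintro y hy ⟨x, hxL, rfl⟩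
      exact (hLsub hxL).2 (hAsub hy)
    have hLdiff : μ ((K ∩ Aᶜ) \ L) ≤ (ε : ℝ≥0∞)/2 := by
      rw [measure_diff_le_iff_le_add hLcl.measurableSet.nullMeasurableSet hLsub
        (measure_ne_top μ _)]
      exact hLμ.le
    have hpre : f ⁻¹' (f '' L)ᶜ ⊆ A ∪ (Kᶜ ∪ ((K ∩ Aᶜ) \ L)) := by
      intro x hx
      by_cases hxA : x ∈ A
      · exact Or.inl hxA
      by_cases hxK : x ∈ K
      · refine Or.inr (Or.inr ⟨⟨hxK, hxA⟩, fun hxL => hx (mem_image_of_mem f hxL)⟩)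
      · exact Or.inr (Or.inl hxK)
    calc Measure.map f μ E ≤ Measure.map f μ (f '' L)ᶜ := measure_mono hEB
      _ = μ (f ⁻¹' (f '' L)ᶜ) := Measure.map_apply hf hBm
      _ ≤ μ (A ∪ (Kᶜ ∪ ((K ∩ Aᶜ) \ L))) := measure_mono hpre
      _ ≤ μ A + μ (Kᶜ ∪ ((K ∩ Aᶜ) \ L)) := measure_union_le _ _
      _ ≤ μ A + (μ Kᶜ + μ ((K ∩ Aᶜ) \ L)) := add_le_add_right (measure_union_le _ _) _
      _ ≤ μ (f ⁻¹' E) + ((ε : ℝ≥0∞)/2 + (ε : ℝ≥0∞)/2) := by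
          rw [hAμ]
          gcongr
      _ = μ (f ⁻¹' E) + ε := by rw [ENNReal.add_halves]
  · exact Measure.le_map_apply hf.aemeasurable E

end Main
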